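/- Let T > 0, h₀ < 0, h₁ ∈ ℝ, λ = cT with c = (-h₀ - h₁T)/(h₀T²). If h: [0,∞) → ℝ is C², h(0) = h₀, h'(0) = h₁, and h''(t) + 2λh'(t) + λ²h(t) ≥ 0 for all t ≥ 0, then h(t) ≥ 0 for all t ≥ T. -/

import Mathlib

theorem stmt_14 (T h₀ h₁ : ℝ) (hT : 0 < T) (hh₀ : h₀ < 0)
    (c lam : ℝ) (hc : c = (-h₀ - h₁ * T) / (h₀ * T ^ 2)) (hlam : lam = c * T)
    (h : ℝ → ℝ) (hC2 : ContDiff ℝ 2 h)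
    (h0 : h 0 = h₀) (h1 : deriv h 0 = h₁)
    (hineq : ∀ t ≥ (0 : ℝ),
      deriv (deriv h) t + 2 * lam * deriv h t + lam ^ 2 * h t ≥ 0) :
    ∀ t ≥ T, h t ≥ 0 := by
  have hC2' : ContDiff ℝ (1 + 1) h := by
    have : ((2:ℕ∞) : WithTop ℕ∞) = 1 + 1 := by norm_num
    exact this ▸ hC2
  obtain ⟨hdiff, -, hC1⟩ := contDiff_succ_iff_deriv.mp hC2'
  have hdiff' : Differentiable ℝ (deriv h) := hC1.differentiable one_ne_zero
  set g : ℝ → ℝ := fun t => Real.exp (lam * t) * h t with hgdef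
  set G1 : ℝ → ℝ := fun t => Real.exp (lam * t) * (lam * h t + deriv h t) with hG1def
  have he : ∀ t : ℝ, HasDerivAt (fun t => Real.exp (lam * t)) (lam * Real.exp (lam * t)) t := by
    intro t
    simpa [mul_comm] using ((hasDerivAt_id t).const_mul lam).exp
  have hg : ∀ t, HasDerivAt g (G1 t) t := by
    intro t
    have := (he t).fun_mul (hdiff t).hasDerivAt
    refine this.congr_deriv ?_
    simp [hG1def]; ring
  have hG1 : ∀ t, HasDerivAt G1
      (Real.exp (lam * t) * (deriv (deriv h) t + 2 * lam * deriv h t + lam ^ 2 * h t)) t := by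
    intro t
    have := (he t).fun_mul (((hdiff t).hasDerivAt.const_mul lam).fun_add (hdiff' t).hasDerivAt)
    refine this.congr_deriv ?_
    ring
  -- d0 = g'(0)
  have d0 : G1 0 = -h₀ / T := by
    have hT0 : T ≠ 0 := ne_of_gt hT
    have hh0 : h₀ ≠ 0 := ne_of_lt hh₀
    simp only [hG1def, mul_zero, Real.exp_zero, one_mul, h0, h1, hlam, hc]
    field_simp
    ring
  set φ : ℝ → ℝ := fun t => g t - (h₀ + (-h₀ / T) * t) with hφdef
  have hφ : ∀ t, HasDerivAt φ (G1 t - (-h₀ / T)) t := by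
    intro t
    simpa using (hg t).fun_sub (((hasDerivAt_id t).const_mul (-h₀ / T)).const_add h₀)
  -- G1 is monotone on Ici 0
  have hmonoG1 : MonotoneOn G1 (Set.Ici (0:ℝ)) := by
    apply monotoneOn_of_deriv_nonneg (convex_Ici 0)
    · exact fun x _ => ((hG1 x).continuousAt).continuousWithinAt
    · exact fun x _ => ((hG1 x).differentiableAt).differentiableWithinAt
    · intro x hx
      rw [interior_Ici] at hx
      rw [(hG1 x).deriv]
      exact mul_nonneg (Real.exp_pos _).le (hineq x (le_of_lt hx))
  -- φ is monotone on Ici 0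
  have hmonoφ : MonotoneOn φ (Set.Ici (0:ℝ)) := by
    apply monotoneOn_of_deriv_nonneg (convex_Ici 0)
    · exact fun x _ => ((hφ x).continuousAt).continuousWithinAt
    · exact fun x _ => ((hφ x).differentiableAt).differentiableWithinAt
    · intro x hx
      rw [interior_Ici] at hx
      rw [(hφ x).deriv]
      have := hmonoG1 (Set.self_mem_Ici) (Set.mem_Ici.mpr hx.le) hx.le
      rw [d0] at this
      linarith
  intro t ht
  have ht0 : (0:ℝ) ≤ t := le_trans hT.le ht
  have hφ0 : φ 0 = 0 := by simp [hφdef, hgdef, h0]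
  have := hmonoφ (Set.self_mem_Ici) (Set.mem_Ici.mpr ht0) ht0
  rw [hφ0] at this
  have hgt : g t ≥ h₀ + (-h₀ / T) * t := by simpa [hφdef, sub_nonneg] using this
  have hlin : (0:ℝ) ≤ h₀ + (-h₀ / T) * t := by
    rw [div_mul_eq_mul_div]
    have : h₀ + -h₀ * t / T = (h₀ * (T - t)) / T := by field_simp; ring
    rw [this]
    apply div_nonneg _ hT.le
    nlinarith
  have hgt0 : 0 ≤ Real.exp (lam * t) * h t := le_trans hlin hgt
  nlinarith [Real.exp_pos (lam * t)]
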